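/- In a priced game, let σ be a strategy profile that is optimal, and let j ∈ Aₖ be an improving switch for Player i with respect to σ in the associated infinitesimal game (i.e., j changes the valuation without changing the payoff). Then the potential matrix strictly decreases: P(σ[j]) ≺ P(σ), where ≺ is the lexicographic order on potential matrices in which lower rates are more significant and, within a rate, shorter path lengths are more significant. -/

import Mathlib

noncomputable section

open Classical
open scoped ENNReal

namespace PTGpaper

/-- A priced game: finitely many states partitioned between Player 1 (owner `0`,
the minimizer) and Player 2 (owner `1`, the maximizer), actions with nonnegative
(extended real) costs and destinations in the states or the terminal state
(modeled by `none`). -/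
structure PricedGame where
  n : ℕ
  owner : Fin n → Fin 2
  A : Fin n → Finset ℕ
  cost : ℕ → ℝ≥0∞
  dest : ℕ → Option (Fin n)

namespace PricedGame

variable (G : PricedGame)

/-- A positional strategy profile: a choice of an available action in each state. -/
def Valid (σ : Fin G.n → ℕ) : Prop :=
  ∀ k, σ k ∈ G.A k

def step (σ : Fin G.n → ℕ) (o : Option (Fin G.n)) : Option (Fin G.n) :=
  o.bind fun k => G.dest (σ k)

/-- The state reached after `t` steps of the path `P_{k,σ}` (`none` = terminal). -/
def reach (σ : Fin G.n → ℕ) (k : Fin G.n) (t : ℕ) : Option (Fin G.n) :=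
  (G.step σ)^[t] (some k)

/-- The path from `k` under `σ` reaches the terminal state `⊥`. -/
def Terminates (σ : Fin G.n → ℕ) (k : Fin G.n) : Prop :=
  ∃ t, G.reach σ k t = none

/-- Payoff `u(k,σ)`: total cost of the path from `k` to `⊥`, or `∞` if `⊥` is unreached. -/
def payoff (σ : Fin G.n → ℕ) (k : Fin G.n) : ℝ≥0∞ :=
  if G.Terminates σ k then
    ∑' t : ℕ, (G.reach σ k t).elim 0 (fun k' => G.cost (σ k'))
  else ⊤

/-- Length `ℓ(k,σ)` of the path from `k` to `⊥` (`⊤` if `⊥` is unreached). -/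
def len (σ : Fin G.n → ℕ) (k : Fin G.n) : ℕ∞ :=
  ⨅ (t : ℕ) (_ : G.reach σ k t = none), (t : ℕ∞)

def payoffO (σ : Fin G.n → ℕ) (o : Option (Fin G.n)) : ℝ≥0∞ :=
  o.elim 0 (G.payoff σ)

def lenO (σ : Fin G.n → ℕ) (o : Option (Fin G.n)) : ℕ∞ :=
  o.elim 0 (G.len σ)

/-- The valuation `ν(k,σ) = (u(k,σ), ℓ(k,σ))`, ordered lexicographically. -/
def valn (σ : Fin G.n → ℕ) (k : Fin G.n) : ℝ≥0∞ ×ₗ ℕ∞ :=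
  toLex (G.payoff σ k, G.len σ k)

/-- The valuation obtained by first using action `j` and then following `σ`. -/
def cand (σ : Fin G.n → ℕ) (j : ℕ) : ℝ≥0∞ ×ₗ ℕ∞ :=
  toLex (G.cost j + G.payoffO σ (G.dest j), 1 + G.lenO σ (G.dest j))

/-- `j ∈ A k` is an improving switch for Player 1 (the minimizer) at `k` w.r.t. `σ`. -/
def Improving1 (σ : Fin G.n → ℕ) (k : Fin G.n) (j : ℕ) : Prop :=
  j ∈ G.A k ∧ G.cand σ j < G.valn σ k

/-- `j ∈ A k` is an improving switch for Player 2 (the maximizer) at `k` w.r.t. `σ`. -/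
def Improving2 (σ : Fin G.n → ℕ) (k : Fin G.n) (j : ℕ) : Prop :=
  j ∈ G.A k ∧ G.valn σ k < G.cand σ j

/-- Strongly improving switch for Player 1: strictly smaller payoff. -/
def StronglyImproving1 (σ : Fin G.n → ℕ) (k : Fin G.n) (j : ℕ) : Prop :=
  j ∈ G.A k ∧ G.cost j + G.payoffO σ (G.dest j) < G.payoff σ k

/-- Strongly improving switch for Player 2: strictly larger payoff. -/
def StronglyImproving2 (σ : Fin G.n → ℕ) (k : Fin G.n) (j : ℕ) : Prop :=
  j ∈ G.A k ∧ G.payoff σ k < G.cost j + G.payoffO σ (G.dest j)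

/-- Combine a Player 1 strategy and a Player 2 strategy into a profile. -/
def combine (σ₁ σ₂ : Fin G.n → ℕ) (k : Fin G.n) : ℕ :=
  if G.owner k = 0 then σ₁ k else σ₂ k

/-- The upper value `min_{σ₁} max_{σ₂} u(k,σ₁,σ₂)`. -/
def upperVal (k : Fin G.n) : ℝ≥0∞ :=
  ⨅ σ₁ : {σ : Fin G.n → ℕ // G.Valid σ}, ⨆ σ₂ : {σ : Fin G.n → ℕ // G.Valid σ},
    G.payoff (G.combine σ₁ σ₂) k

/-- The lower value `max_{σ₂} min_{σ₁} u(k,σ₁,σ₂)`. -/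
def lowerVal (k : Fin G.n) : ℝ≥0∞ :=
  ⨆ σ₂ : {σ : Fin G.n → ℕ // G.Valid σ}, ⨅ σ₁ : {σ : Fin G.n → ℕ // G.Valid σ},
    G.payoff (G.combine σ₁ σ₂) k

/-- `σ₁` is a best response of Player 1 to `σ₂`: it minimizes the payoff at every state. -/
def BestResponse1 (σ₁ σ₂ : Fin G.n → ℕ) : Prop :=
  G.Valid σ₁ ∧ ∀ σ₁' : Fin G.n → ℕ, G.Valid σ₁' →
    ∀ k, G.payoff (G.combine σ₁ σ₂) k ≤ G.payoff (G.combine σ₁' σ₂) k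

/-- `σ₂` is a best response of Player 2 to `σ₁`: it maximizes the payoff at every state. -/
def BestResponse2 (σ₁ σ₂ : Fin G.n → ℕ) : Prop :=
  G.Valid σ₂ ∧ ∀ σ₂' : Fin G.n → ℕ, G.Valid σ₂' →
    ∀ k, G.payoff (G.combine σ₁ σ₂') k ≤ G.payoff (G.combine σ₁ σ₂) k

/-- `σ₁` is an optimal Player 1 strategy: it attains the upper value at every state. -/
def Optimal1 (σ₁ : Fin G.n → ℕ) : Prop :=
  G.Valid σ₁ ∧ ∀ k,
    (⨆ σ₂ : {σ : Fin G.n → ℕ // G.Valid σ}, G.payoff (G.combine σ₁ σ₂) k) = G.upperVal k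

/-- `σ₂` is an optimal Player 2 strategy: it attains the lower value at every state. -/
def Optimal2 (σ₂ : Fin G.n → ℕ) : Prop :=
  G.Valid σ₂ ∧ ∀ k,
    (⨅ σ₁ : {σ : Fin G.n → ℕ // G.Valid σ}, G.payoff (G.combine σ₁ σ₂) k) = G.lowerVal k

/-- `σ[B]`: switch `σ` to the actions prescribed by the partial assignment `β`
(at most one action per state). -/
def switch (σ : Fin G.n → ℕ) (β : Fin G.n → Option ℕ) (k : Fin G.n) : ℕ :=
  (β k).getD (σ k)

/-- `β` represents an improving set `B` for Player 1: it contains at least one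
improving switch for Player 1 and no improving switch for Player 2. -/
def ImprovingSet1 (σ : Fin G.n → ℕ) (β : Fin G.n → Option ℕ) : Prop :=
  (∀ k j, β k = some j → j ∈ G.A k) ∧
  (∃ k j, β k = some j ∧ G.Improving1 σ k j) ∧
  (∀ k j, β k = some j → ¬ G.Improving2 σ k j)

/-- `β` represents an improving set `B` for Player 2. -/
def ImprovingSet2 (σ : Fin G.n → ℕ) (β : Fin G.n → Option ℕ) : Prop :=
  (∀ k j, β k = some j → j ∈ G.A k) ∧
  (∃ k j, β k = some j ∧ G.Improving2 σ k j) ∧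
  (∀ k j, β k = some j → ¬ G.Improving1 σ k j)

end PricedGame

end PTGpaper

namespace PTGpaper

namespace PricedGame

variable (G : PricedGame)

/-- The number of steps the path from `k` under `σ` takes to reach `⊥`
(i.e. `ℓ(k,σ)`, as a natural number; `0` if `⊥` is unreached). -/
def pathLen (σ : Fin G.n → ℕ) (k : Fin G.n) : ℕ :=
  sInf {t | G.reach σ k t = none}

/-- `r(k,σ)`: the rate of the state at which the path from `k` under `σ` waits,
i.e. the rate of the second-to-last state if the last action used is the designated
waiting action of that state, and `0` otherwise. -/
def waitRate (rate : Fin G.n → ℝ≥0∞) (wait : Fin G.n → ℕ)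
    (σ : Fin G.n → ℕ) (k : Fin G.n) : ℝ≥0∞ :=
  if G.Terminates σ k then
    (G.reach σ k (G.pathLen σ k - 1)).elim 0
      (fun k' => if σ k' = wait k' then rate k' else 0)
  else 0

/-- `count(σ,i,ℓ,ρ)`: the number of states of player `i` at distance `ℓ` from `⊥`
in `σ` that reach a waiting state of rate `ρ`. -/
def countPot (rate : Fin G.n → ℝ≥0∞) (wait : Fin G.n → ℕ)
    (σ : Fin G.n → ℕ) (i : Fin 2) (ℓ : ℕ) (ρ : ℝ≥0∞) : ℕ :=
  Nat.card {k : Fin G.n // G.owner k = i ∧ G.Terminates σ k ∧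
    G.pathLen σ k = ℓ ∧ G.waitRate rate wait σ k = ρ}

/-- The potential matrix `P(σ)`, indexed by path lengths and rates. -/
def potential (rate : Fin G.n → ℝ≥0∞) (wait : Fin G.n → ℕ)
    (σ : Fin G.n → ℕ) : ℕ → ℝ≥0∞ → ℤ :=
  fun ℓ ρ => (G.countPot rate wait σ 1 ℓ ρ : ℤ) - (G.countPot rate wait σ 0 ℓ ρ : ℤ)

end PricedGame

/-- The lexicographic order `≺` on potential matrices: entries of lower rates are more
significant, and within a rate, entries of shorter lengths are more significant. -/
def PrecPot (P Q : ℕ → ℝ≥0∞ → ℤ) : Prop :=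
  ∃ (ℓ : ℕ) (ρ : ℝ≥0∞),
    (∀ ρ' < ρ, ∀ ℓ', P ℓ' ρ' = Q ℓ' ρ') ∧
    (∀ ℓ' < ℓ, P ℓ' ρ = Q ℓ' ρ) ∧
    P ℓ ρ < Q ℓ ρ

end PTGpaper

namespace PTGpaper

open PricedGame

namespace PricedGame

variable (G : PricedGame)

lemma reach_succ' (σ : Fin G.n → ℕ) (k : Fin G.n) (t : ℕ) :
    G.reach σ k (t + 1) = G.step σ (G.reach σ k t) :=
  Function.iterate_succ_apply' _ _ _

lemma reach_none_mono (σ : Fin G.n → ℕ) (k : Fin G.n) {t t' : ℕ} (h : t ≤ t')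
    (h0 : G.reach σ k t = none) : G.reach σ k t' = none := by
  obtain ⟨s, rfl⟩ := Nat.exists_eq_add_of_le h
  induction s with
  | zero => exact h0
  | succ s ih =>
      rw [show t + (s + 1) = (t + s) + 1 from rfl, reach_succ', ih (Nat.le_add_right _ _)]
      rfl

lemma reach_add (σ : Fin G.n → ℕ) {k' k : Fin G.n} {d : ℕ}
    (hd : G.reach σ k' d = some k) (s : ℕ) :
    G.reach σ k' (d + s) = G.reach σ k s := by
  unfold reach at *
  rw [add_comm, Function.iterate_add_apply, hd]

lemma reach_agree {σ τ : Fin G.n → ℕ} {k : Fin G.n}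
    (hagree : ∀ m, m ≠ k → σ m = τ m) (k' : Fin G.n) :
    ∀ t : ℕ, (∀ s < t, G.reach σ k' s ≠ some k) → G.reach τ k' t = G.reach σ k' t := by
  intro t
  induction t with
  | zero => intro _; rfl
  | succ t ih =>
      intro h
      have ht : G.reach τ k' t = G.reach σ k' t :=
        ih (fun s hs => h s (hs.trans (Nat.lt_succ_self t)))
      rw [reach_succ', reach_succ', ht]
      cases hcase : G.reach σ k' t with
      | none => rfl
      | some m =>
          have hm : m ≠ k := fun hmk => h t (Nat.lt_succ_self t) (by rw [hcase, hmk])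
          show G.dest (τ m) = G.dest (σ m)
          rw [hagree m hm]

lemma pathLen_mem {σ : Fin G.n → ℕ} {k : Fin G.n} (h : G.Terminates σ k) :
    G.reach σ k (G.pathLen σ k) = none :=
  Nat.sInf_mem h

lemma pathLen_not_lt {σ : Fin G.n → ℕ} {k : Fin G.n} {t : ℕ} (ht : t < G.pathLen σ k) :
    G.reach σ k t ≠ none :=
  Nat.notMem_of_lt_sInf ht

lemma pathLen_pos {σ : Fin G.n → ℕ} {k : Fin G.n} (h : G.Terminates σ k) :
    1 ≤ G.pathLen σ k := by
  rcases Nat.eq_zero_or_pos (G.pathLen σ k) with h0 | h1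
  · have hmem := G.pathLen_mem h
    rw [h0] at hmem
    exact absurd hmem (by simp [reach])
  · exact h1

lemma hit_props (rate : Fin G.n → ℝ≥0∞) (wait : Fin G.n → ℕ)
    {σ : Fin G.n → ℕ} {k k' : Fin G.n} {d : ℕ}
    (hd : G.reach σ k' d = some k) (hk : G.Terminates σ k) :
    G.Terminates σ k' ∧ G.pathLen σ k' = d + G.pathLen σ k ∧
      G.waitRate rate wait σ k' = G.waitRate rate wait σ k := by
  have hterm' : G.reach σ k' (d + G.pathLen σ k) = none := by
    rw [G.reach_add σ hd]; exact G.pathLen_mem hk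
  have hT' : G.Terminates σ k' := ⟨_, hterm'⟩
  have hnot : ∀ t < d + G.pathLen σ k, G.reach σ k' t ≠ none := by
    intro t ht hnone
    rcases Nat.lt_or_ge t d with h | h
    · have h2 := G.reach_none_mono σ k' (le_of_lt h) hnone
      rw [hd] at h2; exact Option.some_ne_none _ h2
    · obtain ⟨s, rfl⟩ := Nat.exists_eq_add_of_le h
      rw [G.reach_add σ hd] at hnone
      exact G.pathLen_not_lt (by omega) hnone
  have hlen : G.pathLen σ k' = d + G.pathLen σ k := by
    apply le_antisymm (Nat.sInf_le hterm')
    by_contra hlt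
    push_neg at hlt
    exact hnot _ hlt (G.pathLen_mem hT')
  refine ⟨hT', hlen, ?_⟩
  have hL1 : 1 ≤ G.pathLen σ k := G.pathLen_pos hk
  have hr : G.reach σ k' (G.pathLen σ k' - 1) = G.reach σ k (G.pathLen σ k - 1) := by
    rw [hlen, show d + G.pathLen σ k - 1 = d + (G.pathLen σ k - 1) by omega, G.reach_add σ hd]
  rw [waitRate, waitRate, if_pos hT', if_pos hk, hr]

lemma nohit_props (rate : Fin G.n → ℝ≥0∞) (wait : Fin G.n → ℕ)
    {σ τ : Fin G.n → ℕ} {k : Fin G.n}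
    (hagree : ∀ m, m ≠ k → σ m = τ m) (k' : Fin G.n)
    (h : ∀ t, G.reach σ k' t ≠ some k) :
    (G.Terminates τ k' ↔ G.Terminates σ k') ∧ G.pathLen τ k' = G.pathLen σ k' ∧
      G.waitRate rate wait τ k' = G.waitRate rate wait σ k' := by
  have hr : ∀ t, G.reach τ k' t = G.reach σ k' t := fun t =>
    G.reach_agree hagree k' t (fun s _ => h s)
  have hT : G.Terminates τ k' ↔ G.Terminates σ k' := by
    unfold Terminates
    exact exists_congr fun t => by rw [hr]
  have hpl : G.pathLen τ k' = G.pathLen σ k' := by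
    unfold pathLen
    congr 1
    ext t
    simp only [Set.mem_setOf_eq, hr]
  refine ⟨hT, hpl, ?_⟩
  rw [waitRate, waitRate, hpl]
  have hx : ((G.reach τ k' (G.pathLen σ k' - 1)).elim 0 fun m => if τ m = wait m then rate m else 0)
      = ((G.reach σ k' (G.pathLen σ k' - 1)).elim 0 fun m => if σ m = wait m then rate m else 0) := by
    rw [hr]
    cases hc : G.reach σ k' (G.pathLen σ k' - 1) with
    | none => rfl
    | some m =>
        have hm : m ≠ k := fun hmk => h _ (by rw [hc, hmk])
        show (if τ m = wait m then rate m else 0) = (if σ m = wait m then rate m else 0)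
        rw [hagree m hm]
  rw [hx]
  exact if_congr hT rfl rfl

/-- The predicate defining the set counted by `countPot`. -/
def Qpred (rate : Fin G.n → ℝ≥0∞) (wait : Fin G.n → ℕ) (σ : Fin G.n → ℕ)
    (i : Fin 2) (ℓ : ℕ) (ρ : ℝ≥0∞) (k' : Fin G.n) : Prop :=
  G.owner k' = i ∧ G.Terminates σ k' ∧ G.pathLen σ k' = ℓ ∧ G.waitRate rate wait σ k' = ρ

lemma countPot_eq_card (rate : Fin G.n → ℝ≥0∞) (wait : Fin G.n → ℕ)
    (σ : Fin G.n → ℕ) (i : Fin 2) (ℓ : ℕ) (ρ : ℝ≥0∞) :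
    G.countPot rate wait σ i ℓ ρ =
      Nat.card {k' : Fin G.n // G.Qpred rate wait σ i ℓ ρ k'} := rfl

end PricedGame

lemma card_congr_iff {α : Type*} {p q : α → Prop} (h : ∀ x, p x ↔ q x) :
    Nat.card {x // p x} = Nat.card {x // q x} :=
  Nat.card_congr (Equiv.subtypeEquivRight h)

lemma card_succ_of {α : Type*} [Finite α] {p q : α → Prop} (a : α)
    (hpa : p a) (hqa : ¬ q a) (h : ∀ x, x ≠ a → (p x ↔ q x)) :
    Nat.card {x // p x} = Nat.card {x // q x} + 1 := by
  have hins : {x | p x} = insert a {x | q x} := by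
    ext x
    by_cases hx : x = a
    · subst hx; simp [hpa]
    · simp [hx, h x hx]
  have h1 : Nat.card {x // p x} = Set.ncard {x | p x} := rfl
  have h2 : Nat.card {x // q x} = Set.ncard {x | q x} := rfl
  rw [h1, h2, hins, Set.ncard_insert_of_notMem (by simpa using hqa)]

/-- The generic lexicographic counting step. -/
lemma precPot_aux (G : PricedGame) (rate : Fin G.n → ℝ≥0∞) (wait : Fin G.n → ℕ)
    (σ' σ : Fin G.n → ℕ) (k : Fin G.n) (ℓ₀ : ℕ) (ρ₀ : ℝ≥0∞)
    (hiff : ∀ k', k' ≠ k → ∀ (i : Fin 2) (ℓ' : ℕ) (ρ' : ℝ≥0∞),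
      (ρ' < ρ₀ ∨ (ρ' = ρ₀ ∧ ℓ' ≤ ℓ₀)) →
      (G.Qpred rate wait σ' i ℓ' ρ' k' ↔ G.Qpred rate wait σ i ℓ' ρ' k'))
    (hkE : ∀ (i : Fin 2) (ℓ' : ℕ) (ρ' : ℝ≥0∞), (ρ' < ρ₀ ∨ (ρ' = ρ₀ ∧ ℓ' < ℓ₀)) →
      ¬ G.Qpred rate wait σ' i ℓ' ρ' k ∧ ¬ G.Qpred rate wait σ i ℓ' ρ' k)
    (hpiv : (G.Qpred rate wait σ' 0 ℓ₀ ρ₀ k ∧ ¬ G.Qpred rate wait σ 0 ℓ₀ ρ₀ k ∧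
              ¬ G.Qpred rate wait σ' 1 ℓ₀ ρ₀ k ∧ ¬ G.Qpred rate wait σ 1 ℓ₀ ρ₀ k) ∨
            (¬ G.Qpred rate wait σ' 0 ℓ₀ ρ₀ k ∧ ¬ G.Qpred rate wait σ 0 ℓ₀ ρ₀ k ∧
              ¬ G.Qpred rate wait σ' 1 ℓ₀ ρ₀ k ∧ G.Qpred rate wait σ 1 ℓ₀ ρ₀ k)) :
    PrecPot (G.potential rate wait σ') (G.potential rate wait σ) := by
  refine ⟨ℓ₀, ρ₀, ?_, ?_, ?_⟩
  · intro ρ' hρ ℓ'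
    have hc : ∀ i, G.countPot rate wait σ' i ℓ' ρ' = G.countPot rate wait σ i ℓ' ρ' := by
      intro i
      rw [G.countPot_eq_card, G.countPot_eq_card]
      apply card_congr_iff
      intro x
      by_cases hx : x = k
      · subst hx
        have h := hkE i ℓ' ρ' (Or.inl hρ)
        exact iff_of_false h.1 h.2
      · exact hiff x hx i ℓ' ρ' (Or.inl hρ)
    simp only [potential, hc]
  · intro ℓ' hℓ
    have hc : ∀ i, G.countPot rate wait σ' i ℓ' ρ₀ = G.countPot rate wait σ i ℓ' ρ₀ := by
      intro i
      rw [G.countPot_eq_card, G.countPot_eq_card]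
      apply card_congr_iff
      intro x
      by_cases hx : x = k
      · subst hx
        have h := hkE i ℓ' ρ₀ (Or.inr ⟨rfl, hℓ⟩)
        exact iff_of_false h.1 h.2
      · exact hiff x hx i ℓ' ρ₀ (Or.inr ⟨rfl, le_of_lt hℓ⟩)
    simp only [potential, hc]
  · rcases hpiv with ⟨h1, h2, h3, h4⟩ | ⟨h1, h2, h3, h4⟩
    · have hc0 : G.countPot rate wait σ' 0 ℓ₀ ρ₀ = G.countPot rate wait σ 0 ℓ₀ ρ₀ + 1 := by
        rw [G.countPot_eq_card, G.countPot_eq_card]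
        exact card_succ_of k h1 h2 (fun x hx => hiff x hx 0 ℓ₀ ρ₀ (Or.inr ⟨rfl, le_refl _⟩))
      have hc1 : G.countPot rate wait σ' 1 ℓ₀ ρ₀ = G.countPot rate wait σ 1 ℓ₀ ρ₀ := by
        rw [G.countPot_eq_card, G.countPot_eq_card]
        apply card_congr_iff
        intro x
        by_cases hx : x = k
        · subst hx; exact iff_of_false h3 h4
        · exact hiff x hx 1 ℓ₀ ρ₀ (Or.inr ⟨rfl, le_refl _⟩)
      simp only [potential, hc0, hc1]
      push_cast
      omega
    · have hc1 : G.countPot rate wait σ 1 ℓ₀ ρ₀ = G.countPot rate wait σ' 1 ℓ₀ ρ₀ + 1 := by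
        rw [G.countPot_eq_card, G.countPot_eq_card]
        exact card_succ_of k h4 h3
          (fun x hx => (hiff x hx 1 ℓ₀ ρ₀ (Or.inr ⟨rfl, le_refl _⟩)).symm)
      have hc0 : G.countPot rate wait σ' 0 ℓ₀ ρ₀ = G.countPot rate wait σ 0 ℓ₀ ρ₀ := by
        rw [G.countPot_eq_card, G.countPot_eq_card]
        apply card_congr_iff
        intro x
        by_cases hx : x = k
        · subst hx; exact iff_of_false h1 h2
        · exact hiff x hx 0 ℓ₀ ρ₀ (Or.inr ⟨rfl, le_refl _⟩)
      simp only [potential, hc0, hc1]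
      push_cast
      omega

/-- The arithmetic case bash: `(Rw, Lw)` is lexicographically smaller than `(Rl, Ll)`. -/
lemma lex_bash (Lw Ll : ℕ) (Rw Rl : ℝ≥0∞) (himp : Rw < Rl ∨ (Rw = Rl ∧ Lw < Ll)) :
    (∀ (ℓ' d : ℕ) (ρ' : ℝ≥0∞), 1 ≤ d → (ρ' < Rw ∨ (ρ' = Rw ∧ ℓ' ≤ Lw)) →
       ¬(ℓ' = d + Lw ∧ ρ' = Rw) ∧ ¬(ℓ' = d + Ll ∧ ρ' = Rl)) ∧
    (∀ (ℓ' : ℕ) (ρ' : ℝ≥0∞), (ρ' < Rw ∨ (ρ' = Rw ∧ ℓ' < Lw)) →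
       ¬(ℓ' = Lw ∧ ρ' = Rw) ∧ ¬(ℓ' = Ll ∧ ρ' = Rl)) ∧
    ¬(Lw = Ll ∧ Rw = Rl) := by
  have hle : Rw ≤ Rl := by
    rcases himp with h | ⟨h, _⟩
    · exact le_of_lt h
    · exact le_of_eq h
  refine ⟨?_, ?_, ?_⟩
  · intro ℓ' d ρ' hd hcond
    constructor
    · rintro ⟨hl, hrho⟩
      rcases hcond with h | ⟨h, hle'⟩
      · exact absurd hrho (ne_of_lt h)
      · omega
    · rintro ⟨hl, hrho⟩
      rcases himp with h | ⟨h, hLl⟩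
      · rcases hcond with h' | ⟨h', _⟩
        · exact absurd hrho (ne_of_lt (h'.trans h))
        · exact absurd (h' ▸ hrho) (ne_of_lt h)
      · rcases hcond with h' | ⟨h', hle'⟩
        · exact absurd hrho (ne_of_lt (h ▸ h'))
        · omega
  · intro ℓ' ρ' hcond
    constructor
    · rintro ⟨hl, hrho⟩
      rcases hcond with h | ⟨h, hlt⟩
      · exact absurd hrho (ne_of_lt h)
      · omega
    · rintro ⟨hl, hrho⟩
      rcases himp with h | ⟨h, hLl⟩
      · rcases hcond with h' | ⟨h', _⟩
        · exact absurd hrho (ne_of_lt (h'.trans h))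
        · exact absurd (h' ▸ hrho) (ne_of_lt h)
      · rcases hcond with h' | ⟨h', hlt⟩
        · exact absurd hrho (ne_of_lt (h ▸ h'))
        · omega
  · rintro ⟨hL, hR⟩
    rcases himp with h | ⟨h, hLl⟩
    · exact absurd hR (ne_of_lt h)
    · omega

/-- in a priced game derived from an SPTG (each state `k` has a rate and a
designated waiting action `wait k` leading to `⊥`), if `σ` is an optimal strategy profile
and `j ∈ A k` is an improving switch for the owner of `k` in the associated infinitesimal
game — i.e. it leaves all payoffs unchanged but improves the (waiting rate, length)
valuation at `k` for the owner of `k` — then the potential matrix strictly decreases: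
`P(σ[j]) ≺ P(σ)`. -/
theorem improving_switch_decreases_potential (G : PricedGame)
    (rate : Fin G.n → ℝ≥0∞) (wait : Fin G.n → ℕ)
    (hwait : ∀ k, wait k ∈ G.A k ∧ G.dest (wait k) = none)
    (σ : Fin G.n → ℕ) (hσ : G.Valid σ)
    (k : Fin G.n) (j : ℕ) (hj : j ∈ G.A k) (hne : j ≠ σ k)
    (hterm : G.Terminates σ k ∧ G.Terminates (Function.update σ k j) k)
    (hpay : ∀ k', G.payoff (Function.update σ k j) k' = G.payoff σ k')
    (himp1 : G.owner k = 0 →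
      G.waitRate rate wait (Function.update σ k j) k < G.waitRate rate wait σ k ∨
      (G.waitRate rate wait (Function.update σ k j) k = G.waitRate rate wait σ k ∧
        G.pathLen (Function.update σ k j) k < G.pathLen σ k))
    (himp2 : G.owner k = 1 →
      G.waitRate rate wait σ k < G.waitRate rate wait (Function.update σ k j) k ∨
      (G.waitRate rate wait (Function.update σ k j) k = G.waitRate rate wait σ k ∧
        G.pathLen σ k < G.pathLen (Function.update σ k j) k)) :
    PrecPot (G.potential rate wait (Function.update σ k j)) (G.potential rate wait σ) := by
  classical
  obtain ⟨htσ, htσ'⟩ := hterm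
  set σ' := Function.update σ k j with hσ'def
  have hagree : ∀ m, m ≠ k → σ m = σ' m := fun m hm =>
    (Function.update_of_ne hm j σ).symm
  set L := G.pathLen σ k with hLdef
  set L' := G.pathLen σ' k with hL'def
  set R := G.waitRate rate wait σ k with hRdef
  set R' := G.waitRate rate wait σ' k with hR'def
  -- characterization of membership for `k` itself
  have hQk : ∀ (τ : Fin G.n → ℕ), G.Terminates τ k → ∀ (i : Fin 2) (ℓ : ℕ) (ρ : ℝ≥0∞),
      (G.Qpred rate wait τ i ℓ ρ k ↔
        (G.owner k = i ∧ ℓ = G.pathLen τ k ∧ ρ = G.waitRate rate wait τ k)) := by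
    intro τ hT i ℓ ρ
    unfold Qpred
    constructor
    · rintro ⟨h1, -, h3, h4⟩; exact ⟨h1, h3.symm, h4.symm⟩
    · rintro ⟨h1, h3, h4⟩; exact ⟨h1, hT, h3.symm, h4.symm⟩
  -- classification of all other states
  have hclass : ∀ k' : Fin G.n, k' ≠ k →
      (∀ (i : Fin 2) (ℓ : ℕ) (ρ : ℝ≥0∞),
        G.Qpred rate wait σ' i ℓ ρ k' ↔ G.Qpred rate wait σ i ℓ ρ k') ∨
      ∃ d : ℕ, 1 ≤ d ∧
        (∀ (i : Fin 2) (ℓ : ℕ) (ρ : ℝ≥0∞), (G.Qpred rate wait σ i ℓ ρ k' ↔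
          (G.owner k' = i ∧ ℓ = d + L ∧ ρ = R))) ∧
        (∀ (i : Fin 2) (ℓ : ℕ) (ρ : ℝ≥0∞), (G.Qpred rate wait σ' i ℓ ρ k' ↔
          (G.owner k' = i ∧ ℓ = d + L' ∧ ρ = R'))) := by
    intro k' hk'
    by_cases hhit : ∃ t, G.reach σ k' t = some k
    · right
      have hd : G.reach σ k' (Nat.find hhit) = some k := Nat.find_spec hhit
      have hdmin : ∀ s < Nat.find hhit, G.reach σ k' s ≠ some k :=
        fun s hs => Nat.find_min hhit hs
      have hd1 : 1 ≤ Nat.find hhit := by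
        rcases Nat.eq_zero_or_pos (Nat.find hhit) with h0 | h1
        · exfalso
          rw [h0] at hd
          have hsome : (some k' : Option (Fin G.n)) = some k := hd
          exact hk' (Option.some.inj hsome)
        · exact h1
      have hd' : G.reach σ' k' (Nat.find hhit) = some k := by
        rw [G.reach_agree hagree k' (Nat.find hhit) hdmin]; exact hd
      obtain ⟨hT1, hP1, hW1⟩ := G.hit_props rate wait hd htσ
      obtain ⟨hT2, hP2, hW2⟩ := G.hit_props rate wait hd' htσ'
      refine ⟨Nat.find hhit, hd1, ?_, ?_⟩
      · intro i ℓ ρ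
        unfold Qpred
        rw [hP1, hW1]
        constructor
        · rintro ⟨h1, -, h3, h4⟩; exact ⟨h1, h3.symm, h4.symm⟩
        · rintro ⟨h1, h3, h4⟩; exact ⟨h1, hT1, h3.symm, h4.symm⟩
      · intro i ℓ ρ
        unfold Qpred
        rw [hP2, hW2]
        constructor
        · rintro ⟨h1, -, h3, h4⟩; exact ⟨h1, h3.symm, h4.symm⟩
        · rintro ⟨h1, h3, h4⟩; exact ⟨h1, hT2, h3.symm, h4.symm⟩
    · left
      push_neg at hhit
      obtain ⟨hT, hP, hW⟩ := G.nohit_props rate wait hagree k' hhit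
      intro i ℓ ρ
      unfold Qpred
      rw [hP, hW]
      exact and_congr_right fun _ => and_congr_left fun _ => hT
  have howner : G.owner k = 0 ∨ G.owner k = 1 := by
    have h2 := (G.owner k).isLt
    have h3 : (G.owner k : ℕ) = 0 ∨ (G.owner k : ℕ) = 1 := by omega
    rcases h3 with h' | h'
    · left; exact Fin.ext h'
    · right; exact Fin.ext h'
  have hzo : (0 : Fin 2) ≠ 1 := by decide
  rcases howner with h0 | h1
  · -- Player 1 (minimizer) owns k: pivot (L', R'), σ' is the "winner"
    obtain ⟨hbash1, hbash2, hbash3⟩ := lex_bash L' L R' R (by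
      rcases himp1 h0 with h | ⟨h, h2⟩
      · exact Or.inl h
      · exact Or.inr ⟨h, h2⟩)
    apply precPot_aux G rate wait σ' σ k L' R'
    · intro k' hk' i ℓ' ρ' hcond
      rcases hclass k' hk' with heq | ⟨d, hd1, hcσ, hcσ'⟩
      · exact heq i ℓ' ρ'
      · rw [hcσ' i ℓ' ρ', hcσ i ℓ' ρ']
        have hb := hbash1 ℓ' d ρ' hd1 hcond
        refine iff_of_false ?_ ?_
        · rintro ⟨-, hl, hr⟩; exact hb.1 ⟨hl, hr⟩
        · rintro ⟨-, hl, hr⟩; exact hb.2 ⟨hl, hr⟩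
    · intro i ℓ' ρ' hcond
      have hb := hbash2 ℓ' ρ' hcond
      constructor
      · rw [hQk σ' htσ' i ℓ' ρ']
        rintro ⟨-, hl, hr⟩; exact hb.1 ⟨hl, hr⟩
      · rw [hQk σ htσ i ℓ' ρ']
        rintro ⟨-, hl, hr⟩; exact hb.2 ⟨hl, hr⟩
    · left
      refine ⟨(hQk σ' htσ' 0 L' R').mpr ⟨h0, rfl, rfl⟩, ?_, ?_, ?_⟩
      · rw [hQk σ htσ 0 L' R']
        rintro ⟨-, hl, hr⟩; exact hbash3 ⟨hl, hr⟩
      · rw [hQk σ' htσ' 1 L' R']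
        rintro ⟨ho, -, -⟩; exact hzo (h0 ▸ ho)
      · rw [hQk σ htσ 1 L' R']
        rintro ⟨ho, -, -⟩; exact hzo (h0 ▸ ho)
  · -- Player 2 (maximizer) owns k: pivot (L, R), σ is the "winner"
    obtain ⟨hbash1, hbash2, hbash3⟩ := lex_bash L L' R R' (by
      rcases himp2 h1 with h | ⟨h, h2⟩
      · exact Or.inl h
      · exact Or.inr ⟨h.symm, h2⟩)
    apply precPot_aux G rate wait σ' σ k L R
    · intro k' hk' i ℓ' ρ' hcond
      rcases hclass k' hk' with heq | ⟨d, hd1, hcσ, hcσ'⟩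
      · exact heq i ℓ' ρ'
      · rw [hcσ' i ℓ' ρ', hcσ i ℓ' ρ']
        have hb := hbash1 ℓ' d ρ' hd1 hcond
        refine iff_of_false ?_ ?_
        · rintro ⟨-, hl, hr⟩; exact hb.2 ⟨hl, hr⟩
        · rintro ⟨-, hl, hr⟩; exact hb.1 ⟨hl, hr⟩
    · intro i ℓ' ρ' hcond
      have hb := hbash2 ℓ' ρ' hcond
      constructor
      · rw [hQk σ' htσ' i ℓ' ρ']
        rintro ⟨-, hl, hr⟩; exact hb.2 ⟨hl, hr⟩
      · rw [hQk σ htσ i ℓ' ρ']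
        rintro ⟨-, hl, hr⟩; exact hb.1 ⟨hl, hr⟩
    · right
      refine ⟨?_, ?_, ?_, (hQk σ htσ 1 L R).mpr ⟨h1, rfl, rfl⟩⟩
      · rw [hQk σ' htσ' 0 L R]
        rintro ⟨ho, -, -⟩; exact hzo ((h1 ▸ ho : (1 : Fin 2) = 0)).symm
      · rw [hQk σ htσ 0 L R]
        rintro ⟨ho, -, -⟩; exact hzo ((h1 ▸ ho : (1 : Fin 2) = 0)).symm
      · rw [hQk σ' htσ' 1 L R]
        rintro ⟨-, hl, hr⟩; exact hbash3 ⟨hl, hr⟩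

end PTGpaper
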